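/- Let X be a random variable with c.d.f. F equal to the GEV c.d.f. G_{μ,σ,ξ} with σ > 0 and 0 < ξ < 1 (so E[|X|] < ∞), and let β_1 = E[X] and β_2 = E[X·F(X)]. Then 2β_2 − β_1 = (σ/ξ)·Γ(1−ξ)·(2^ξ − 1), where Γ is the Gamma function. -/

import Mathlib

open MeasureTheory ProbabilityTheory Set Filter Topology ENNReal

noncomputable def gevCDF (μ σ ξ x : ℝ) : ℝ :=
  if 0 < 1 + ξ * (x - μ) / σ then
    Real.exp (-(1 + ξ * (x - μ) / σ) ^ (-1 / ξ))
  else if 0 < ξ then 0 else 1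

section aux

variable {μ σ ξ : ℝ}

/-- helper function -/
noncomputable def gphi (s : ℝ) : ℝ := if s ≤ 0 then 0 else Real.exp (-s⁻¹)

lemma gphi_abs_le (s : ℝ) : |gphi s| ≤ |s| := by
  unfold gphi
  split_ifs with h
  · simpa using abs_nonneg s
  · push_neg at h
    rw [abs_of_pos (Real.exp_pos _), abs_of_pos h]
    have h1 : s⁻¹ + 1 ≤ Real.exp s⁻¹ := Real.add_one_le_exp _
    have h2 : (0:ℝ) < s⁻¹ := inv_pos.mpr h
    have h3 : s⁻¹ ≤ Real.exp s⁻¹ := by linarith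
    rw [Real.exp_neg]
    calc (Real.exp s⁻¹)⁻¹ ≤ (s⁻¹)⁻¹ := by
          apply inv_anti₀ h2 h3
      _ = s := inv_inv s
/-- gphi is continuous -/
lemma gphi_continuous : Continuous gphi := by
  rw [continuous_iff_continuousAt]
  intro s₀
  rcases lt_trichotomy s₀ 0 with h | h | h
  · have : gphi =ᶠ[𝓝 s₀] fun _ => (0:ℝ) := by
      filter_upwards [eventually_lt_nhds h] with s hs
      simp [gphi, hs.le]
    exact (continuousAt_const).congr this.symm
  · subst h
    have h0 : gphi 0 = 0 := by simp [gphi]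
    rw [ContinuousAt, h0]
    apply squeeze_zero_norm gphi_abs_le
    simpa using ((continuous_abs.tendsto (0:ℝ)))
  · have : gphi =ᶠ[𝓝 s₀] fun s => Real.exp (-s⁻¹) := by
      filter_upwards [eventually_gt_nhds h] with s hs
      simp [gphi, not_le.mpr hs]
    refine ContinuousAt.congr ?_ this.symm
    exact (Real.continuous_exp.continuousAt).comp
      (((continuousAt_inv₀ h.ne')).neg)

lemma gevCDF_eq (hσ : 0 < σ) (hξ0 : 0 < ξ) :
    gevCDF μ σ ξ = fun x => gphi ((max (1 + ξ * (x - μ) / σ) 0) ^ (1/ξ)) := by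
  funext x
  unfold gevCDF gphi
  set h := 1 + ξ * (x - μ) / σ with hh
  by_cases h1 : 0 < h
  · rw [if_pos h1, max_eq_left h1.le]
    have hs : (0:ℝ) < h ^ (1/ξ) := Real.rpow_pos_of_pos h1 _
    rw [if_neg (not_le.mpr hs)]
    congr 1
    rw [← Real.rpow_neg h1.le, neg_div]
  · rw [if_neg h1, if_pos hξ0, max_eq_right (not_lt.mp h1),
      Real.zero_rpow (by positivity : (1/ξ) ≠ 0), if_pos le_rfl]

lemma gevCDF_continuous (hσ : 0 < σ) (hξ0 : 0 < ξ) : Continuous (gevCDF μ σ ξ) := by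
  rw [gevCDF_eq hσ hξ0]
  apply gphi_continuous.comp
  have h1 : Continuous fun s : ℝ => s ^ (1/ξ) := by
    rw [continuous_iff_continuousAt]
    intro x
    exact Real.continuousAt_rpow_const x (1/ξ) (Or.inr (by positivity))
  exact h1.comp (by fun_prop)

end aux

lemma lintegral_image_1d {s : Set ℝ} {f f' : ℝ → ℝ} (hs : MeasurableSet s)
    (hf' : ∀ x ∈ s, HasDerivWithinAt f (f' x) s x) (hf : Set.InjOn f s) (g : ℝ → ℝ≥0∞) :
    ∫⁻ x in f '' s, g x = ∫⁻ x in s, ENNReal.ofReal |f' x| * g (f x) := by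
  simpa only [ContinuousLinearMap.det_toSpanSingleton] using
    MeasureTheory.lintegral_image_eq_lintegral_abs_det_fderiv_mul volume hs
      (fun x hx => (hf' x hx).hasFDerivWithinAt) hf g

variable {μ σ ξ : ℝ}

lemma key_subst (hσ : 0 < σ) (hξ0 : 0 < ξ) (hξ1 : ξ < 1) :
    ∫⁻ t, ENNReal.ofReal (gevCDF μ σ ξ t * (1 - gevCDF μ σ ξ t))
      = ∫⁻ u in Ioi (0:ℝ), ENNReal.ofReal
          (σ * (u ^ (-ξ-1) * (Real.exp (-u) - Real.exp (-(2*u))))) := by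
  have hξ : ξ ≠ 0 := ne_of_gt hξ0
  have hσξ : 0 < σ/ξ := by positivity
  set x₀ := μ - σ/ξ with hx₀
  set T : ℝ → ℝ := fun u => μ + σ/ξ * (u ^ (-ξ) - 1) with hT
  set F := gevCDF μ σ ξ with hF
  -- F vanishes at or below x₀
  have hF0 : ∀ t, t ≤ x₀ → F t = 0 := by
    intro t ht
    have h3 : ξ * (t - μ) ≤ -σ := by
      have h4 := mul_le_mul_of_nonneg_left
        (show t - μ ≤ -(σ/ξ) by rw [hx₀] at ht; linarith) hξ0.le
      have h5 : ξ * (σ/ξ) = σ := by field_simp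
      rw [mul_neg, h5] at h4
      exact h4
    have h1 : 1 + ξ * (t - μ) / σ ≤ 0 := by
      have h5 : ξ*(t-μ)/σ ≤ -σ/σ := (div_le_div_iff_of_pos_right hσ).mpr h3
      rw [neg_div, div_self (ne_of_gt hσ)] at h5
      linarith
    rw [hF]; unfold gevCDF
    rw [if_neg (not_lt.mpr h1), if_pos hξ0]
  -- basic formula for T u - x₀
  have hTgt : ∀ u : ℝ, T u - x₀ = σ/ξ * u ^ (-ξ) := by
    intro u; rw [hT, hx₀]; ring
  -- the image of Ioi 0 under T
  have himg : T '' Ioi 0 = Ioi x₀ := by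
    ext t
    constructor
    · rintro ⟨u, hu, rfl⟩
      rw [Set.mem_Ioi] at hu ⊢
      have h6 := hTgt u
      have h7 : 0 < T u - x₀ := h6 ▸ mul_pos hσξ (Real.rpow_pos_of_pos hu (-ξ))
      linarith
    · intro ht
      rw [Set.mem_Ioi] at ht
      have hw0 : 0 < ξ/σ * (t - x₀) := mul_pos (by positivity) (by linarith)
      refine ⟨(ξ/σ * (t - x₀)) ^ (-ξ)⁻¹, Real.rpow_pos_of_pos hw0 _, ?_⟩
      have hww : ((ξ/σ * (t - x₀)) ^ (-ξ)⁻¹) ^ (-ξ) = ξ/σ * (t - x₀) := by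
        rw [← Real.rpow_mul hw0.le, inv_mul_cancel₀ (by simpa using hξ), Real.rpow_one]
      show μ + σ/ξ * (((ξ/σ * (t - x₀)) ^ (-ξ)⁻¹) ^ (-ξ) - 1) = t
      rw [hww, hx₀]
      field_simp
      ring
  -- derivative of T
  have hderiv : ∀ u ∈ Ioi (0:ℝ), HasDerivWithinAt T (-(σ * u ^ (-ξ-1))) (Ioi 0) u := by
    intro u hu
    rw [Set.mem_Ioi] at hu
    have h1 : HasDerivAt (fun v : ℝ => v ^ (-ξ)) (-ξ * u ^ (-ξ-1)) u :=
      Real.hasDerivAt_rpow_const (Or.inl (ne_of_gt hu))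
    have h2 : HasDerivAt T (σ/ξ * (-ξ * u ^ (-ξ-1))) u :=
      ((h1.sub_const 1).const_mul (σ/ξ)).const_add μ
    have h3 : σ/ξ * (-ξ * u ^ (-ξ-1)) = -(σ * u ^ (-ξ-1)) := by
      field_simp
    rw [h3] at h2
    exact h2.hasDerivWithinAt
  -- injectivity of T
  have hinj : Set.InjOn T (Ioi 0) := by
    intro u hu v hv huv
    rw [Set.mem_Ioi] at hu hv
    have h1 : σ/ξ * (u ^ (-ξ) - 1) = σ/ξ * (v ^ (-ξ) - 1) := by
      have := huv
      rw [hT] at this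
      simpa using this
    have h2 : u ^ (-ξ) = v ^ (-ξ) := by
      have := mul_left_cancel₀ (ne_of_gt hσξ) h1
      linarith
    have h3 : (u ^ (-ξ)) ^ (-ξ)⁻¹ = (v ^ (-ξ)) ^ (-ξ)⁻¹ := by rw [h2]
    rwa [← Real.rpow_mul hu.le, ← Real.rpow_mul hv.le,
      mul_inv_cancel₀ (by simpa using hξ), Real.rpow_one, Real.rpow_one] at h3
  -- value of F on the image
  have hFT : ∀ u : ℝ, 0 < u → F (T u) = Real.exp (-u) := by
    intro u hu
    have hpow : 0 < u ^ (-ξ) := Real.rpow_pos_of_pos hu _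
    have h1 : 1 + ξ * (T u - μ) / σ = u ^ (-ξ) := by
      have hTu : T u = μ + σ/ξ * (u ^ (-ξ) - 1) := rfl
      rw [hTu]; field_simp; ring
    rw [hF]; unfold gevCDF
    rw [h1, if_pos hpow]
    congr 1
    rw [← Real.rpow_mul hu.le, show (-ξ) * (-1/ξ) = 1 by field_simp, Real.rpow_one]
  calc ∫⁻ t, ENNReal.ofReal (F t * (1 - F t))
      = ∫⁻ t in Ioi x₀, ENNReal.ofReal (F t * (1 - F t)) := by
        rw [← lintegral_indicator measurableSet_Ioi]
        congr 1
        funext t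
        by_cases ht : t ∈ Ioi x₀
        · rw [Set.indicator_of_mem ht]
        · rw [Set.indicator_of_notMem ht, hF0 t (by simpa using ht)]
          simp
    _ = ∫⁻ t in T '' Ioi 0, ENNReal.ofReal (F t * (1 - F t)) := by rw [himg]
    _ = ∫⁻ u in Ioi 0, ENNReal.ofReal |(-(σ * u ^ (-ξ-1)))|
          * ENNReal.ofReal (F (T u) * (1 - F (T u))) :=
        lintegral_image_1d measurableSet_Ioi hderiv hinj _
    _ = ∫⁻ u in Ioi (0:ℝ), ENNReal.ofReal
          (σ * (u ^ (-ξ-1) * (Real.exp (-u) - Real.exp (-(2*u))))) := by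
        refine setLIntegral_congr_fun measurableSet_Ioi (fun u hu => ?_)
        rw [Set.mem_Ioi] at hu
        have hp : (0:ℝ) < u ^ (-ξ-1) := Real.rpow_pos_of_pos hu _
        rw [hFT u hu, abs_neg, abs_of_pos (by positivity),
          ← ENNReal.ofReal_mul (by positivity)]
        congr 1
        have key : Real.exp (-u) * (1 - Real.exp (-u))
            = Real.exp (-u) - Real.exp (-(2*u)) := by
          rw [mul_sub, mul_one, ← Real.exp_add]
          ring_nf
        rw [key]
        ring


lemma J_eq {ξ : ℝ} (hξ0 : 0 < ξ) (hξ1 : ξ < 1) :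
    ∫⁻ u in Ioi (0:ℝ), ENNReal.ofReal (u ^ (-ξ-1) * (Real.exp (-u) - Real.exp (-(2*u))))
      = ENNReal.ofReal (Real.Gamma (1-ξ) * ((2:ℝ)^ξ - 1) / ξ) := by
  have hmeas : Measurable (Function.uncurry fun (u c : ℝ) =>
      ENNReal.ofReal (u ^ (-ξ) * Real.exp (-(c*u)))) := by
    apply ENNReal.measurable_ofReal.comp
    show Measurable fun p : ℝ × ℝ => p.1 ^ (-ξ) * Real.exp (-(p.2 * p.1))
    fun_prop
  have step1 : ∀ u ∈ Ioi (0:ℝ),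
      ENNReal.ofReal (u ^ (-ξ-1) * (Real.exp (-u) - Real.exp (-(2*u))))
        = ∫⁻ c in Ioc (1:ℝ) 2, ENNReal.ofReal (u ^ (-ξ) * Real.exp (-(c*u))) := by
    intro u hu
    rw [Set.mem_Ioi] at hu
    rw [← MeasureTheory.ofReal_integral_eq_lintegral_ofReal]
    · congr 1
      rw [← intervalIntegral.integral_of_le (by norm_num : (1:ℝ) ≤ 2)]
      have e1 : ∀ c : ℝ, u ^ (-ξ) * Real.exp (-(c*u)) = u ^ (-ξ) * Real.exp (-u * c) := by
        intro c; ring_nf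
      simp_rw [e1]
      rw [intervalIntegral.integral_const_mul,
        intervalIntegral.integral_comp_mul_left Real.exp (show -u ≠ 0 by linarith),
        integral_exp]
      rw [Real.rpow_sub hu, Real.rpow_one]
      have h2 : -u * 2 = -(2*u) := by ring
      have h1 : -u * 1 = -u := by ring
      rw [h2, h1]
      have hu' : u ≠ 0 := ne_of_gt hu
      show u ^ (-ξ) / u * (Real.exp (-u) - Real.exp (-(2*u)))
        = u ^ (-ξ) * ((-u)⁻¹ • (Real.exp (-(2*u)) - Real.exp (-u)))
      rw [smul_eq_mul, ← neg_inv]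
      field_simp
      ring
    · exact (by fun_prop : Continuous fun c : ℝ => u ^ (-ξ) * Real.exp (-(c*u))).integrableOn_Ioc
    · refine (ae_restrict_iff' measurableSet_Ioc).mpr (ae_of_all _ fun c hc => ?_)
      positivity
  have step3 : ∀ c ∈ Ioc (1:ℝ) 2,
      ∫⁻ u in Ioi (0:ℝ), ENNReal.ofReal (u ^ (-ξ) * Real.exp (-(c*u)))
        = ENNReal.ofReal (Real.Gamma (1-ξ) * c ^ (ξ-1)) := by
    intro c hc
    have hc0 : (0:ℝ) < c := lt_trans one_pos hc.1
    rw [← MeasureTheory.ofReal_integral_eq_lintegral_ofReal]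
    · congr 1
      have key := Real.integral_rpow_mul_exp_neg_mul_Ioi (show (0:ℝ) < 1-ξ by linarith) hc0
      have e2 : (1 - ξ - 1) = -ξ := by ring
      rw [e2] at key
      rw [key, one_div, Real.inv_rpow hc0.le, ← Real.rpow_neg hc0.le, neg_sub]
      ring
    · have := integrableOn_rpow_mul_exp_neg_mul_rpow
        (show (-1:ℝ) < -ξ by linarith) zero_lt_one hc0
      refine this.congr_fun (fun x hx => ?_) measurableSet_Ioi
      simp [Real.rpow_one, neg_mul]
    · refine (ae_restrict_iff' measurableSet_Ioi).mpr (ae_of_all _ fun u hu => ?_)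
      have hu0 : (0:ℝ) < u := hu
      positivity
  have step4 : ∫⁻ c in Ioc (1:ℝ) 2, ENNReal.ofReal (Real.Gamma (1-ξ) * c ^ (ξ-1))
      = ENNReal.ofReal (Real.Gamma (1-ξ) * ((2:ℝ)^ξ - 1) / ξ) := by
    rw [← MeasureTheory.ofReal_integral_eq_lintegral_ofReal]
    · congr 1
      rw [← intervalIntegral.integral_of_le (by norm_num : (1:ℝ) ≤ 2),
        intervalIntegral.integral_const_mul, integral_rpow (Or.inl (by linarith : (-1:ℝ) < ξ-1))]
      rw [show ξ - 1 + 1 = ξ by ring, Real.one_rpow]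
      ring
    · apply IntegrableOn.mono_set ?_ Ioc_subset_Icc_self
      apply ContinuousOn.integrableOn_Icc
      apply ContinuousOn.mul continuousOn_const
      intro c hc
      have : c ≠ 0 := by rintro rfl; exact absurd hc.1 (by norm_num)
      exact (Real.continuousAt_rpow_const c _ (Or.inl this)).continuousWithinAt
    · refine (ae_restrict_iff' measurableSet_Ioc).mpr (ae_of_all _ fun c hc => ?_)
      exact mul_nonneg (Real.Gamma_nonneg_of_nonneg (by linarith))
        (Real.rpow_nonneg (by linarith [hc.1] : (0:ℝ) ≤ c) _)
  calc ∫⁻ u in Ioi (0:ℝ), ENNReal.ofReal (u ^ (-ξ-1) * (Real.exp (-u) - Real.exp (-(2*u))))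
      = ∫⁻ u in Ioi (0:ℝ), ∫⁻ c in Ioc (1:ℝ) 2,
          ENNReal.ofReal (u ^ (-ξ) * Real.exp (-(c*u))) :=
        setLIntegral_congr_fun measurableSet_Ioi step1
    _ = ∫⁻ c in Ioc (1:ℝ) 2, ∫⁻ u in Ioi (0:ℝ),
          ENNReal.ofReal (u ^ (-ξ) * Real.exp (-(c*u))) :=
        lintegral_lintegral_swap hmeas.aemeasurable
    _ = ∫⁻ c in Ioc (1:ℝ) 2, ENNReal.ofReal (Real.Gamma (1-ξ) * c ^ (ξ-1)) :=
        setLIntegral_congr_fun measurableSet_Ioc step3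
    _ = ENNReal.ofReal (Real.Gamma (1-ξ) * ((2:ℝ)^ξ - 1) / ξ) := step4


lemma F_lintegral {μ σ ξ : ℝ} (hσ : 0 < σ) (hξ0 : 0 < ξ) (hξ1 : ξ < 1) :
    ∫⁻ t, ENNReal.ofReal (gevCDF μ σ ξ t * (1 - gevCDF μ σ ξ t))
      = ENNReal.ofReal (σ / ξ * Real.Gamma (1 - ξ) * ((2:ℝ)^ξ - 1)) := by
  rw [key_subst hσ hξ0 hξ1]
  simp_rw [ENNReal.ofReal_mul hσ.le]
  rw [lintegral_const_mul' _ _ ENNReal.ofReal_ne_top, J_eq hξ0 hξ1,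
    ← ENNReal.ofReal_mul hσ.le]
  congr 1
  field_simp

theorem gev_pwm_scale_relation
    {Ω : Type*} [MeasureSpace Ω] [IsProbabilityMeasure (ℙ : Measure Ω)]
    (X : Ω → ℝ) (hX : Measurable X)
    (μ σ ξ : ℝ) (hσ : 0 < σ) (hξ0 : 0 < ξ) (hξ1 : ξ < 1)
    (hcdf : ∀ x, (ℙ {ω | X ω ≤ x}).toReal = gevCDF μ σ ξ x)
    (hint1 : Integrable X ℙ)
    (hint2 : Integrable (fun ω => X ω * gevCDF μ σ ξ (X ω)) ℙ) :
    2 * (∫ ω, X ω * gevCDF μ σ ξ (X ω) ∂ℙ) - (∫ ω, X ω ∂ℙ)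
      = σ / ξ * Real.Gamma (1 - ξ) * ((2 : ℝ) ^ ξ - 1) := by
  set F := gevCDF μ σ ξ with hFdef
  have hFcont : Continuous F := gevCDF_continuous hσ hξ0
  set ν : Measure ℝ := Measure.map X ℙ with hν
  have hνprob : IsProbabilityMeasure ν := Measure.isProbabilityMeasure_map hX.aemeasurable
  -- the CDF of ν
  have hIic : ∀ x, ν (Iic x) = ENNReal.ofReal (F x) := by
    intro x
    rw [hν, Measure.map_apply hX measurableSet_Iic]
    have h0 : X ⁻¹' Iic x = {ω | X ω ≤ x} := rfl
    rw [h0, ← hcdf x]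
    exact (ENNReal.ofReal_toReal (measure_ne_top _ _)).symm
  have hF01 : ∀ x, 0 ≤ F x ∧ F x ≤ 1 := by
    intro x
    constructor
    · rw [← hcdf x]; exact ENNReal.toReal_nonneg
    · rw [← hcdf x]
      have h1 := prob_le_one (μ := (ℙ : Measure Ω)) (s := {ω | X ω ≤ x})
      have := (ENNReal.toReal_le_toReal (measure_ne_top _ _) ENNReal.one_ne_top).mpr h1
      simpa using this
  have hIicR : ∀ x, (ν (Iic x)).toReal = F x := by
    intro x; rw [hIic x, ENNReal.toReal_ofReal (hF01 x).1]
  have hIoi : ∀ x, ν (Ioi x) = ENNReal.ofReal (1 - F x) := by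
    intro x
    have h1 : Ioi x = (Iic x)ᶜ := (Set.compl_Iic).symm
    rw [h1, measure_compl measurableSet_Iic (measure_ne_top _ _), measure_univ, hIic,
      ← ENNReal.ofReal_one, ← ENNReal.ofReal_sub _ (hF01 x).1]
  -- ν is atomless
  have hatom : ∀ a : ℝ, ν {a} = 0 := by
    intro a
    have h1 : ∀ b, b < a → ν {a} ≤ ENNReal.ofReal (F a - F b) := by
      intro b hb
      have hsub : {a} ⊆ Iic a \ Iic b := by
        intro y hy
        rw [Set.mem_singleton_iff] at hy; subst hy
        exact ⟨Set.self_mem_Iic, by simpa using hb⟩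
      calc ν {a} ≤ ν (Iic a \ Iic b) := measure_mono hsub
        _ = ν (Iic a) - ν (Iic b) :=
            measure_diff (Set.Iic_subset_Iic.mpr hb.le) measurableSet_Iic.nullMeasurableSet
              (measure_ne_top _ _)
        _ ≤ ENNReal.ofReal (F a - F b) := by
            rw [hIic, hIic, ← ENNReal.ofReal_sub _ (hF01 b).1]
    have h2 : Tendsto (fun n : ℕ => ENNReal.ofReal (F a - F (a - 1/(n+1)))) atTop (𝓝 0) := by
      have h3 : Tendsto (fun n : ℕ => a - 1/(n+1)) atTop (𝓝 a) := by
        have := tendsto_one_div_add_atTop_nhds_zero_nat (𝕜 := ℝ)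
        have h4 := this.const_sub a
        simpa using h4
      have h5 : Tendsto (fun n : ℕ => F a - F (a - 1/(n+1))) atTop (𝓝 (F a - F a)) :=
        ((hFcont.continuousAt.tendsto).comp h3).const_sub (F a)
      rw [sub_self] at h5
      have := ENNReal.tendsto_ofReal h5
      simpa using this
    have h6 : ν {a} ≤ 0 :=
      ge_of_tendsto' h2 (fun n => h1 _ (by
        have : (0:ℝ) < 1/(n+1) := by positivity
        linarith))
    exact le_antisymm h6 zero_le
  have hIio : ∀ x, ν (Iio x) = ν (Iic x) := by
    intro x
    apply le_antisymm (measure_mono Iio_subset_Iic_self)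
    calc ν (Iic x) = ν ({x} ∪ Iio x) := by
          congr 1
          rw [← Set.Iio_insert, Set.insert_eq]
      _ ≤ ν {x} + ν (Iio x) := measure_union_le _ _
      _ = ν (Iio x) := by rw [hatom]; simp
  -- transported integrals and integrability
  have hφm : AEStronglyMeasurable (fun x : ℝ => x * F x) ν :=
    (continuous_id.mul hFcont).aestronglyMeasurable
  have hint1' : Integrable (fun x : ℝ => x) ν := by
    rw [hν]
    exact (integrable_map_measure aestronglyMeasurable_id hX.aemeasurable).mpr hint1
  have hint2' : Integrable (fun x : ℝ => x * F x) ν := by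
    rw [hν] at hφm ⊢
    exact (integrable_map_measure hφm hX.aemeasurable).mpr hint2
  have hβ1 : ∫ x, x ∂ν = ∫ ω, X ω ∂ℙ := by
    rw [hν]; exact integral_map hX.aemeasurable aestronglyMeasurable_id
  have hβ2 : ∫ x, x * F x ∂ν = ∫ ω, X ω * F (X ω) ∂ℙ := by
    rw [hν] at hφm ⊢; exact integral_map hX.aemeasurable hφm
  set P : Measure (ℝ × ℝ) := ν.prod ν with hP
  -- integrability on the product
  have hPfst : Integrable (fun p : ℝ × ℝ => p.1) P := by
    have hm : P.map Prod.fst = ν := by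
      rw [hP, Measure.map_fst_prod, measure_univ, one_smul]
    have h2 : Integrable (fun x : ℝ => x) (P.map Prod.fst) := hm ▸ hint1'
    exact (integrable_map_measure aestronglyMeasurable_id
      measurable_fst.aemeasurable).mp h2
  have hPsnd : Integrable (fun p : ℝ × ℝ => p.2) P := by
    have hm : P.map Prod.snd = ν := by
      rw [hP, Measure.map_snd_prod, measure_univ, one_smul]
    have h2 : Integrable (fun x : ℝ => x) (P.map Prod.snd) := hm ▸ hint1'
    exact (integrable_map_measure aestronglyMeasurable_id
      measurable_snd.aemeasurable).mp h2
  have hmaxint : Integrable (fun p : ℝ × ℝ => max p.1 p.2) P := by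
    have hbd : Integrable (fun p : ℝ × ℝ => |p.1| + |p.2|) P := hPfst.abs.add hPsnd.abs
    apply Integrable.mono' hbd
    · exact (continuous_fst.max continuous_snd).aestronglyMeasurable
    · refine ae_of_all _ fun p => ?_
      rw [Real.norm_eq_abs]
      rcases le_total p.1 p.2 with h | h
      · rw [max_eq_right h]; linarith [abs_nonneg p.1]
      · rw [max_eq_left h]; linarith [abs_nonneg p.2]
  -- the two indicator pieces of the max
  set g1 : ℝ × ℝ → ℝ := Set.indicator {p : ℝ × ℝ | p.2 ≤ p.1} (fun p => p.1) with hg1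
  set g2 : ℝ × ℝ → ℝ := Set.indicator {p : ℝ × ℝ | p.1 < p.2} (fun p => p.2) with hg2
  set g3 : ℝ × ℝ → ℝ := Set.indicator {p : ℝ × ℝ | p.2 < p.1} (fun p => p.1) with hg3
  have hs1 : MeasurableSet {p : ℝ × ℝ | p.2 ≤ p.1} := measurableSet_le measurable_snd measurable_fst
  have hs2 : MeasurableSet {p : ℝ × ℝ | p.1 < p.2} := measurableSet_lt measurable_fst measurable_snd
  have hs3 : MeasurableSet {p : ℝ × ℝ | p.2 < p.1} := measurableSet_lt measurable_snd measurable_fst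
  have hg1int : Integrable g1 P := hPfst.indicator hs1
  have hg2int : Integrable g2 P := hPsnd.indicator hs2
  have hg3int : Integrable g3 P := hPfst.indicator hs3
  have hsum : (fun p : ℝ × ℝ => max p.1 p.2) = fun p => g1 p + g2 p := by
    funext p
    rw [hg1, hg2]
    rcases le_or_gt p.2 p.1 with h | h
    · rw [Set.indicator_of_mem (by exact h), Set.indicator_of_notMem (by simpa using h),
        max_eq_left h, add_zero]
    · rw [Set.indicator_of_notMem (by simpa using h), Set.indicator_of_mem (by exact h),
        max_eq_right h.le, zero_add]
  -- swap symmetry: ∫ g2 = ∫ g3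
  have hswap : ∫ p, g2 p ∂P = ∫ p, g3 p ∂P := by
    have hPswap : Measure.map Prod.swap P = P := by rw [hP]; exact Measure.prod_swap
    have hg3m : AEStronglyMeasurable g3 (Measure.map Prod.swap P) := by
      rw [hPswap]
      exact (hg3int).aestronglyMeasurable
    have h1 : ∫ p, g3 p ∂(Measure.map Prod.swap P) = ∫ p, g3 (Prod.swap p) ∂P :=
      integral_map measurable_swap.aemeasurable hg3m
    rw [hPswap] at h1
    rw [h1]
    congr 1
  -- Fubini for g1 and g3
  have e1 : ∫ p, g1 p ∂P = ∫ x, x * F x ∂ν := by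
    rw [hP, integral_prod _ (hP ▸ hg1int)]
    have h1 : ∀ x : ℝ, ∫ y, g1 (x, y) ∂ν = x * F x := by
      intro x
      have h2 : (fun y => g1 (x, y)) = Set.indicator (Iic x) (fun _ => x) := by
        funext y
        rw [hg1]
        by_cases h : y ≤ x
        · rw [Set.indicator_of_mem (by exact h), Set.indicator_of_mem (by exact h)]
        · rw [Set.indicator_of_notMem (by exact h), Set.indicator_of_notMem (by exact h)]
      rw [h2, integral_indicator_const _ measurableSet_Iic, measureReal_def, hIicR, smul_eq_mul, mul_comm]
    simp_rw [h1]
  have e3 : ∫ p, g3 p ∂P = ∫ x, x * F x ∂ν := by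
    rw [hP, integral_prod _ (hP ▸ hg3int)]
    have h1 : ∀ x : ℝ, ∫ y, g3 (x, y) ∂ν = x * F x := by
      intro x
      have h2 : (fun y => g3 (x, y)) = Set.indicator (Iio x) (fun _ => x) := by
        funext y
        rw [hg3]
        by_cases h : y < x
        · rw [Set.indicator_of_mem (by exact h), Set.indicator_of_mem (by exact h)]
        · rw [Set.indicator_of_notMem (by exact h), Set.indicator_of_notMem (by exact h)]
      rw [h2, integral_indicator_const _ measurableSet_Iio, measureReal_def, hIio, hIicR, smul_eq_mul, mul_comm]
    simp_rw [h1]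
  have hEmax : ∫ p, max p.1 p.2 ∂P = (∫ x, x * F x ∂ν) + (∫ x, x * F x ∂ν) := by
    calc ∫ p, max p.1 p.2 ∂P = ∫ p, (g1 p + g2 p) ∂P := by rw [← hsum]
      _ = ∫ p, g1 p ∂P + ∫ p, g2 p ∂P := integral_add hg1int hg2int
      _ = (∫ x, x * F x ∂ν) + (∫ x, x * F x ∂ν) := by rw [e1, hswap, e3]
  have hfst : ∫ p, p.1 ∂P = ∫ x, x ∂ν := by
    rw [hP, integral_prod _ (hP ▸ hPfst)]
    simp [measure_univ]
  have hkey : ∫ p, (max p.1 p.2 - p.1) ∂P = 2*(∫ x, x * F x ∂ν) - ∫ x, x ∂ν := by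
    rw [integral_sub hmaxint hPfst, hEmax, hfst]; ring
  -- now pass to the Lebesgue integral
  have hnonneg : ∀ p : ℝ × ℝ, 0 ≤ max p.1 p.2 - p.1 :=
    fun p => sub_nonneg.mpr (le_max_left _ _)
  have hofReal : ENNReal.ofReal (∫ p, (max p.1 p.2 - p.1) ∂P)
      = ∫⁻ p, ENNReal.ofReal (max p.1 p.2 - p.1) ∂P :=
    ofReal_integral_eq_lintegral_ofReal (hmaxint.sub hPfst) (ae_of_all _ hnonneg)
  -- Fubini with Lebesgue measure
  set S : Set ((ℝ × ℝ) × ℝ) := {q | q.1.1 ≤ q.2 ∧ q.2 < q.1.2} with hS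
  have hSme : MeasurableSet S := by
    apply MeasurableSet.inter
    · exact measurableSet_le (measurable_fst.comp measurable_fst) measurable_snd
    · exact measurableSet_lt measurable_snd (measurable_snd.comp measurable_fst)
  have hlin : ∫⁻ p, ENNReal.ofReal (max p.1 p.2 - p.1) ∂P
      = ∫⁻ t, ENNReal.ofReal (F t * (1 - F t)) := by
    have e4 : ∀ p : ℝ × ℝ, ENNReal.ofReal (max p.1 p.2 - p.1)
        = ∫⁻ t, S.indicator (fun _ => (1:ℝ≥0∞)) (p, t) := by
      intro p
      have h2 : (fun t => S.indicator (fun _ => (1:ℝ≥0∞)) (p, t))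
          = Set.indicator (Ico p.1 p.2) (fun _ => (1:ℝ≥0∞)) := by
        funext t
        by_cases h : p.1 ≤ t ∧ t < p.2
        · rw [Set.indicator_of_mem (by exact h), Set.indicator_of_mem (by exact h)]
        · rw [Set.indicator_of_notMem (by exact h), Set.indicator_of_notMem (by exact h)]
      rw [h2, lintegral_indicator measurableSet_Ico, setLIntegral_one, Real.volume_Ico]
      rcases le_total p.1 p.2 with h | h
      · rw [max_eq_right h]
      · rw [max_eq_left h, sub_self, ENNReal.ofReal_zero,
          ENNReal.ofReal_of_nonpos (by linarith)]
    simp_rw [e4]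
    have hum : Measurable (Function.uncurry
        fun (p : ℝ × ℝ) (t : ℝ) => S.indicator (fun _ => (1:ℝ≥0∞)) (p, t)) := by
      show Measurable fun q : (ℝ × ℝ) × ℝ => S.indicator (fun _ => (1:ℝ≥0∞)) (q.1, q.2)
      exact measurable_const.indicator hSme
    have hswap2 : ∫⁻ p, (∫⁻ t, S.indicator (fun _ => (1:ℝ≥0∞)) (p, t) ∂volume) ∂P
        = ∫⁻ t, (∫⁻ p, S.indicator (fun _ => (1:ℝ≥0∞)) (p, t) ∂P) ∂volume :=
      lintegral_lintegral_swap hum.aemeasurable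
    rw [hswap2]
    congr 1
    funext t
    have h3 : (fun p : ℝ × ℝ => S.indicator (fun _ => (1:ℝ≥0∞)) (p, t))
        = Set.indicator (Iic t ×ˢ Ioi t) (fun _ => (1:ℝ≥0∞)) := by
      funext p
      by_cases h : p.1 ≤ t ∧ t < p.2
      · rw [Set.indicator_of_mem (by exact h), Set.indicator_of_mem (by exact h)]
      · rw [Set.indicator_of_notMem (by exact h), Set.indicator_of_notMem (by exact h)]
    rw [h3, lintegral_indicator (measurableSet_Iic.prod measurableSet_Ioi), setLIntegral_one,
      hP, Measure.prod_prod, hIic, hIoi, ← ENNReal.ofReal_mul (hF01 t).1]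
  -- conclude
  have hfinal : ENNReal.ofReal (2*(∫ x, x * F x ∂ν) - ∫ x, x ∂ν)
      = ENNReal.ofReal (σ / ξ * Real.Gamma (1 - ξ) * ((2:ℝ)^ξ - 1)) := by
    rw [← hkey, hofReal, hlin, hFdef, F_lintegral hσ hξ0 hξ1]
  have hL : 0 ≤ 2*(∫ x, x * F x ∂ν) - ∫ x, x ∂ν := by
    rw [← hkey]
    exact integral_nonneg hnonneg
  have hR : 0 ≤ σ / ξ * Real.Gamma (1 - ξ) * ((2:ℝ)^ξ - 1) := by
    have h1 : 0 < Real.Gamma (1 - ξ) := Real.Gamma_pos_of_pos (by linarith)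
    have h2 : (1:ℝ) ≤ 2 ^ ξ := by
      have := Real.rpow_le_rpow_of_exponent_le (by norm_num : (1:ℝ) ≤ 2) hξ0.le
      rwa [Real.rpow_zero] at this
    have h3 : 0 < σ / ξ := by positivity
    have h4 : (0:ℝ) ≤ 2 ^ ξ - 1 := by linarith
    exact mul_nonneg (mul_nonneg h3.le h1.le) h4
  have := (ENNReal.ofReal_eq_ofReal_iff hL hR).mp hfinal
  linarith [this, hβ1, hβ2]
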